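/- Let X be a normed space and F ⊆ X a nonempty closed convex set containing the origin. Then ρ_F(x) = 0 if and only if x ∈ F_∞, where ρ_F(x) = inf{t ≥ 0 : x ∈ t•F} and F_∞ is the asymptotic cone of F. -/

import Mathlib

open scoped ENNReal Pointwise

/-- The asymptotic cone of `F` at base point `x`. -/
def asympCone {X : Type*} [NormedAddCommGroup X] [NormedSpace ℝ X]
    (F : Set X) (x : X) : Set X :=
  {d | ∀ t : ℝ, 0 < t → x + t • d ∈ F}

/-- The generalized Minkowski function of `F`. -/
noncomputable def mink {X : Type*} [NormedAddCommGroup X] [NormedSpace ℝ X]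
    (F : Set X) (u : X) : ℝ≥0∞ :=
  sInf (ENNReal.ofReal '' {t : ℝ | 0 ≤ t ∧ ∃ f ∈ F, u = t • f})

theorem mink_eq_zero_iff {X : Type*} [NormedAddCommGroup X] [NormedSpace ℝ X]
    (F : Set X) (hFne : F.Nonempty) (hFcl : IsClosed F) (hFconv : Convex ℝ F)
    (h0F : (0 : X) ∈ F) (x : X) :
    mink F x = 0 ↔ x ∈ asympCone F 0 := by
  constructor
  · intro h s hs
    have hlt : mink F x < ENNReal.ofReal s⁻¹ := by
      rw [h]; exact ENNReal.ofReal_pos.mpr (by positivity)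
    obtain ⟨a, ha, halt⟩ := sInf_lt_iff.mp hlt
    obtain ⟨t, ⟨ht0, f, hf, hxf⟩, rfl⟩ := ha
    have htlt : t < s⁻¹ := by
      rwa [ENNReal.ofReal_lt_ofReal_iff (by positivity)] at halt
    have hst : s * t ≤ 1 := by
      rw [← mul_inv_cancel₀ (ne_of_gt hs)]
      exact mul_le_mul_of_nonneg_left (le_of_lt htlt) (le_of_lt hs)
    have : (1 - s * t) • (0 : X) + (s * t) • f ∈ F :=
      hFconv h0F hf (by nlinarith) (by positivity) (by ring)
    simpa [hxf, smul_smul] using this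
  · intro hx
    refine le_antisymm ?_ zero_le
    refine ENNReal.le_of_forall_pos_le_add fun ε hε _ => ?_
    have hεR : (0 : ℝ) < (ε : ℝ) := by exact_mod_cast hε
    have hmem : ENNReal.ofReal (ε : ℝ) ∈
        ENNReal.ofReal '' {t : ℝ | 0 ≤ t ∧ ∃ f ∈ F, x = t • f} := by
      refine ⟨(ε : ℝ), ⟨le_of_lt hεR, (ε : ℝ)⁻¹ • x, ?_, ?_⟩, rfl⟩
      · simpa using hx (ε : ℝ)⁻¹ (by positivity)
      · rw [smul_smul, mul_inv_cancel₀ (ne_of_gt hεR), one_smul]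
    calc mink F x ≤ ENNReal.ofReal (ε : ℝ) := sInf_le hmem
      _ = (ε : ℝ≥0∞) := ENNReal.ofReal_coe_nnreal
      _ ≤ 0 + ε := by simp
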